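/- Let N ≥ 1 and let Q be a symmetric 3N×3N real matrix. Suppose X* is SDP-feasible, X* minimizes trace(QX) over all SDP-feasible X, and X* = (R*)ᵀ R* for some matrix R* ∈ ℝ^{3×3N}. Then every 3×3 block of R* belongs to sO(3), and R* is a global minimizer of trace(Q RᵀR) over all R ∈ ℝ^{3×3N} whose 3×3 blocks belong to sO(3). -/

import Mathlib

open Matrix

/-- The `i`-th 3×3 block of a 3×3N matrix. -/
def blk {N : ℕ} (R : Matrix (Fin 3) (Fin N × Fin 3) ℝ) (i : Fin N) :
    Matrix (Fin 3) (Fin 3) ℝ := fun a b => R a (i, b)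

/-- Membership in sO(3): a nonnegative multiple of an orthogonal matrix. -/
def sO3 (M : Matrix (Fin 3) (Fin 3) ℝ) : Prop :=
  ∃ (s : ℝ) (Q : Matrix (Fin 3) (Fin 3) ℝ), 0 ≤ s ∧ Qᵀ * Q = 1 ∧ M = s • Q

/-- SDP feasibility: positive semidefinite with scaled-identity 3×3 diagonal blocks. -/
def SDPfeas {N : ℕ} (X : Matrix (Fin N × Fin 3) (Fin N × Fin 3) ℝ) : Prop :=
  X.PosSemidef ∧ ∀ i : Fin N, ∃ α : ℝ, ∀ a b : Fin 3,
    X (i, a) (i, b) = if a = b then α else 0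

lemma sO3_of_gram (B : Matrix (Fin 3) (Fin 3) ℝ) (α : ℝ)
    (h : Bᵀ * B = α • (1 : Matrix (Fin 3) (Fin 3) ℝ)) : sO3 B := by
  have hα : 0 ≤ α := by
    have h00 := congrFun (congrFun h 0) 0
    simp [Matrix.mul_apply, Matrix.one_apply, Matrix.transpose_apply] at h00
    rw [← h00]
    exact Finset.sum_nonneg fun k _ => mul_self_nonneg _
  rcases eq_or_lt_of_le hα with h0 | hpos
  · -- α = 0, so B = 0
    have hB : B = 0 := by
      ext k a
      have hd := congrFun (congrFun h a) a
      simp [Matrix.mul_apply, Matrix.one_apply, Matrix.transpose_apply, ← h0] at hd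
      have := (Finset.sum_eq_zero_iff_of_nonneg
        (fun j (_ : j ∈ Finset.univ) => mul_self_nonneg (B j a))).mp hd k (Finset.mem_univ k)
      have : B k a * B k a = 0 := this
      exact mul_self_eq_zero.mp this
    exact ⟨0, 1, le_refl 0, by simp, by simp [hB]⟩
  · refine ⟨Real.sqrt α, (Real.sqrt α)⁻¹ • B, Real.sqrt_nonneg α, ?_, ?_⟩
    · have hs : Real.sqrt α ≠ 0 := ne_of_gt (Real.sqrt_pos.mpr hpos)
      have hsq : Real.sqrt α * Real.sqrt α = α := Real.mul_self_sqrt hpos.le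
      rw [Matrix.transpose_smul, Matrix.smul_mul, Matrix.mul_smul, h, smul_smul, smul_smul]
      have h1 : (Real.sqrt α)⁻¹ * (Real.sqrt α)⁻¹ * α = 1 := by
        rw [← mul_inv, hsq, inv_mul_cancel₀ hpos.ne']
      rw [h1, one_smul]
    · have hs : Real.sqrt α ≠ 0 := ne_of_gt (Real.sqrt_pos.mpr hpos)
      rw [smul_smul, mul_inv_cancel₀ hs, one_smul]

lemma gram_block {N : ℕ} (R : Matrix (Fin 3) (Fin N × Fin 3) ℝ) (i : Fin N) (a b : Fin 3) :
    (Rᵀ * R) (i, a) (i, b) = ((blk R i)ᵀ * blk R i) a b := by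
  simp [Matrix.mul_apply, Matrix.transpose_apply, blk]

lemma SDPfeas_gram {N : ℕ} (R : Matrix (Fin 3) (Fin N × Fin 3) ℝ)
    (h : ∀ i, sO3 (blk R i)) : SDPfeas (Rᵀ * R) := by
  constructor
  · have := Matrix.posSemidef_conjTranspose_mul_self R
    rwa [Matrix.conjTranspose_eq_transpose_of_trivial] at this
  · intro i
    obtain ⟨s, Q, hs, hQ, hB⟩ := h i
    refine ⟨s ^ 2, fun a b => ?_⟩
    rw [gram_block, hB]
    have : ((s • Q)ᵀ * (s • Q)) = (s * s) • (Qᵀ * Q) := by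
      rw [Matrix.transpose_smul, Matrix.smul_mul, Matrix.mul_smul, smul_smul]
    rw [this, hQ]
    rcases eq_or_ne a b with rfl | hab
    · simp [Matrix.one_apply, sq]
    · simp [Matrix.one_apply, sq, hab]

theorem stmt6 (N : ℕ) (hN : 1 ≤ N)
    (Q : Matrix (Fin N × Fin 3) (Fin N × Fin 3) ℝ) (hQ : Qᵀ = Q)
    (Xstar : Matrix (Fin N × Fin 3) (Fin N × Fin 3) ℝ)
    (hfeas : SDPfeas Xstar)
    (hmin : ∀ X : Matrix (Fin N × Fin 3) (Fin N × Fin 3) ℝ,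
      SDPfeas X → (Q * Xstar).trace ≤ (Q * X).trace)
    (Rstar : Matrix (Fin 3) (Fin N × Fin 3) ℝ)
    (hfac : Xstar = Rstarᵀ * Rstar) :
    (∀ i, sO3 (blk Rstar i)) ∧
    ∀ R : Matrix (Fin 3) (Fin N × Fin 3) ℝ, (∀ i, sO3 (blk R i)) →
      (Q * (Rstarᵀ * Rstar)).trace ≤ (Q * (Rᵀ * R)).trace := by
  constructor
  · intro i
    obtain ⟨α, hα⟩ := hfeas.2 i
    apply sO3_of_gram _ α
    ext a b
    have := hα a b
    rw [hfac, gram_block] at this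
    rw [this]
    simp [Matrix.one_apply]
  · intro R hR
    rw [← hfac]
    exact hmin _ (SDPfeas_gram R hR)
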